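/- arXiv:1201.3023 — 5 statements merged into one kernel-verified Lean document; each statement's English description precedes it below -/
import Mathlib

section
/- For every integer m ≥ 1, as t → 0⁺ one has ∫_{-a}^{a} e^{-x^{2m}/t} dx = (Γ(1/(2m))/m) · t^{1/(2m)} + o(t^{1/(2m)}), for any fixed a > 0; i.e., the limit of t^{-1/(2m)} ∫_{-a}^{a} e^{-x^{2m}/t} dx as t → 0⁺ equals Γ(1/(2m))/m. -/
open Real Filter Set MeasureTheory Topology

lemma laplace_aux (m : ℕ) (hm : 1 ≤ m) :
    Integrable (fun y : ℝ => Real.exp (-(y ^ (2 * m)))) ∧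
    ∫ y : ℝ, Real.exp (-(y ^ (2 * m))) = Real.Gamma (1 / (2 * (m : ℝ))) / m := by
  have hm2 : (1:ℝ) ≤ 2 * (m:ℝ) := by
    have : (1:ℝ) ≤ (m:ℝ) := by exact_mod_cast hm
    linarith
  have heq : ∀ x : ℝ, x ∈ Ioi (0:ℝ) →
      x ^ ((0:ℝ)) * Real.exp (-x ^ (2 * (m:ℝ))) = Real.exp (-(x ^ (2 * m))) := by
    intro x hx
    rw [Real.rpow_zero, one_mul]
    congr 1
    rw [show (2 * (m:ℝ)) = ((2 * m : ℕ) : ℝ) by push_cast; ring, Real.rpow_natCast]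
  have hIoi : IntegrableOn (fun y : ℝ => Real.exp (-(y ^ (2 * m)))) (Ioi 0) :=
    (integrableOn_rpow_mul_exp_neg_rpow (by norm_num) (by linarith)).congr_fun heq measurableSet_Ioi
  have hgeven : ∀ x : ℝ, Real.exp (-((-x) ^ (2 * m))) = Real.exp (-(x ^ (2 * m))) := by
    intro x; rw [Even.neg_pow (even_two_mul m)]
  have hIic : IntegrableOn (fun y : ℝ => Real.exp (-(y ^ (2 * m)))) (Iic 0) := by
    have me : MeasurableEmbedding fun x : ℝ => -x := (Homeomorph.neg ℝ).measurableEmbedding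
    have : IntegrableOn (fun y : ℝ => Real.exp (-(y ^ (2 * m)))) (Iic 0)
        (Measure.map (fun x : ℝ => -x) volume) := by
      rw [me.integrableOn_map_iff]
      simp only [Function.comp_def, hgeven]
      simpa [neg_Iic] using Iff.mpr integrableOn_Ici_iff_integrableOn_Ioi hIoi
    rwa [Measure.map_neg_eq_self] at this
  have hint : Integrable (fun y : ℝ => Real.exp (-(y ^ (2 * m)))) := by
    have := hIic.union hIoi
    rwa [Iic_union_Ioi, integrableOn_univ] at this
  refine ⟨hint, ?_⟩
  have habs : ∀ x : ℝ, Real.exp (-(|x| ^ (2 * m))) = Real.exp (-(x ^ (2 * m))) := by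
    intro x; rw [pow_abs, abs_of_nonneg ((even_two_mul m).pow_nonneg x)]
  calc ∫ y : ℝ, Real.exp (-(y ^ (2 * m)))
      = ∫ y : ℝ, Real.exp (-(|y| ^ (2 * m))) := by simp_rw [habs]
    _ = 2 * ∫ y in Ioi (0:ℝ), Real.exp (-(y ^ (2 * m))) :=
        integral_comp_abs (f := fun y : ℝ => Real.exp (-(y ^ (2 * m))))
    _ = 2 * ∫ y in Ioi (0:ℝ), Real.exp (-y ^ (2 * (m:ℝ))) := by
        congr 1
        refine setIntegral_congr_fun measurableSet_Ioi fun x hx => ?_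
        have := heq x hx
        rw [Real.rpow_zero, one_mul] at this
        exact this.symm
    _ = Real.Gamma (1 / (2 * (m : ℝ))) / m := by
        rw [integral_exp_neg_rpow (by linarith)]
        rw [Real.Gamma_add_one (by positivity)]
        field_simp

/-- One-dimensional Laplace asymptotics: for `m ≥ 1` and fixed `a > 0`,
`t^{-1/(2m)} ∫_{-a}^{a} e^{-x^{2m}/t} dx → Γ(1/(2m))/m` as `t → 0⁺`. -/
theorem laplace_asymptotic_one_dim (m : ℕ) (hm : 1 ≤ m) (a : ℝ) (ha : 0 < a) :
    Tendsto
      (fun t : ℝ => t ^ (-(1 / (2 * (m : ℝ)))) * ∫ x in (-a)..a, Real.exp (-(x ^ (2 * m)) / t))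
      (nhdsWithin 0 (Set.Ioi 0))
      (nhds (Real.Gamma (1 / (2 * (m : ℝ))) / m)) := by
  obtain ⟨hint, hval⟩ := laplace_aux m hm
  have hmR : (1:ℝ) ≤ (m:ℝ) := by exact_mod_cast hm
  set r : ℝ := 1 / (2 * (m : ℝ)) with hr
  have hrpos : 0 < r := by rw [hr]; positivity
  -- the scaling map
  have h1 : Tendsto (fun t : ℝ => t ^ r) (𝓝[>] (0:ℝ)) (𝓝 0) := by
    have := (Real.continuousAt_rpow_const 0 r (Or.inr hrpos.le)).tendsto
    rw [Real.zero_rpow (ne_of_gt hrpos)] at this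
    exact this.mono_left nhdsWithin_le_nhds
  have h2 : Tendsto (fun t : ℝ => t ^ r) (𝓝[>] (0:ℝ)) (𝓝[>] 0) :=
    tendsto_nhdsWithin_of_tendsto_nhds_of_eventually_within _ h1
      (eventually_nhdsWithin_of_forall fun t ht => Real.rpow_pos_of_pos ht r)
  have hinv : Tendsto (fun t : ℝ => (t ^ r)⁻¹) (𝓝[>] (0:ℝ)) atTop :=
    tendsto_inv_nhdsGT_zero.comp h2
  have hbtop : Tendsto (fun t : ℝ => a * (t ^ r)⁻¹) (𝓝[>] (0:ℝ)) atTop :=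
    hinv.const_mul_atTop ha
  have habot : Tendsto (fun t : ℝ => -(a * (t ^ r)⁻¹)) (𝓝[>] (0:ℝ)) atBot :=
    tendsto_neg_atTop_atBot.comp hbtop
  have hlim := intervalIntegral_tendsto_integral hint habot hbtop
  rw [hval] at hlim
  refine hlim.congr' ?_
  filter_upwards [self_mem_nhdsWithin] with t ht
  have ht : (0:ℝ) < t := ht
  have hc : 0 < t ^ r := Real.rpow_pos_of_pos ht r
  have hcne : t ^ r ≠ 0 := ne_of_gt hc
  have hct : (t ^ r) ^ (2 * m) = t := by
    rw [← Real.rpow_natCast (t ^ r) (2 * m), ← Real.rpow_mul ht.le]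
    rw [show r * ((2 * m : ℕ) : ℝ) = 1 by push_cast; rw [hr]; field_simp, Real.rpow_one]
  calc ∫ x in (-(a * (t ^ r)⁻¹))..(a * (t ^ r)⁻¹), Real.exp (-(x ^ (2 * m)))
      = ∫ x in (-(a * (t ^ r)⁻¹))..(a * (t ^ r)⁻¹),
          Real.exp (-((t ^ r * x) ^ (2 * m)) / t) := by
        refine intervalIntegral.integral_congr fun x _ => ?_
        rw [mul_pow, hct]
        congr 1
        field_simp
    _ = (t ^ r)⁻¹ • ∫ x in (t ^ r * (-(a * (t ^ r)⁻¹)))..(t ^ r * (a * (t ^ r)⁻¹)),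
          Real.exp (-(x ^ (2 * m)) / t) :=
        intervalIntegral.integral_comp_mul_left (fun x => Real.exp (-(x ^ (2 * m)) / t)) hcne
    _ = t ^ (-r) * ∫ x in (-a)..a, Real.exp (-(x ^ (2 * m)) / t) := by
        rw [Real.rpow_neg ht.le, smul_eq_mul,
          show t ^ r * -(a * (t ^ r)⁻¹) = -a by field_simp,
          show t ^ r * (a * (t ^ r)⁻¹) = a by field_simp]
end

section
/- Let f be a continuous function on [-a,a] (a > 0) and m ≥ 1 an integer. Then lim_{t→0⁺} t^{-1/(2m)} ∫_{-a}^{a} f(x) e^{-x^{2m}/t} dx = f(0) · Γ(1/(2m))/m. -/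
open Real Filter Set


open MeasureTheory


lemma integrable_exp_neg_pow_aux (m : ℕ) (hm : 1 ≤ m) :
    Integrable (fun y : ℝ => Real.exp (-(y ^ (2*m)))) := by
  have hmaj : Integrable (fun y : ℝ => Real.exp 1 * Real.exp (-|y|)) := by
    refine Integrable.const_mul ?_ _
    have h1 : IntegrableOn (fun y : ℝ => Real.exp (-|y|)) (Iic 0) := by
      refine (integrableOn_exp_Iic 0).congr_fun (fun x hx => ?_) measurableSet_Iic
      simp [abs_of_nonpos (mem_Iic.mp hx)]
    have h2 : IntegrableOn (fun y : ℝ => Real.exp (-|y|)) (Ioi 0) := by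
      refine ((exp_neg_integrableOn_Ioi 0 one_pos).congr_fun (fun x hx => ?_) measurableSet_Ioi)
      simp [abs_of_pos (mem_Ioi.mp hx)]
    rw [← integrableOn_univ, ← Iic_union_Ioi (a := (0:ℝ)), integrableOn_union]
    exact ⟨h1, h2⟩
  refine hmaj.mono' ?_ ?_
  · exact (Real.continuous_exp.comp (continuous_pow (2*m)).neg).aestronglyMeasurable
  · filter_upwards with y
    rw [Real.norm_eq_abs, Real.abs_exp, ← Real.exp_add]
    apply Real.exp_le_exp.mpr
    have h : |y| ≤ y ^ (2*m) + 1 := by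
      rw [← Even.pow_abs (even_two_mul m)]
      rcases le_total |y| 1 with h | h
      · nlinarith [pow_nonneg (abs_nonneg y) (2*m)]
      · have := le_self_pow₀ h (by omega : 2*m ≠ 0)
        linarith
    linarith

lemma integral_exp_neg_pow_aux (m : ℕ) (hm : 1 ≤ m) :
    ∫ y : ℝ, Real.exp (-(y ^ (2*m))) = Real.Gamma (1/(2*(m:ℝ))) / (m:ℝ) := by
  have hm' : (0:ℝ) < m := by exact_mod_cast hm
  have hp : (0:ℝ) < ((2*m : ℕ):ℝ) := by push_cast; linarith
  have h1 : ∀ y : ℝ, Real.exp (-(y ^ (2*m)))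
      = (fun u : ℝ => Real.exp (-(u ^ (((2*m : ℕ)):ℝ)))) |y| := by
    intro y
    simp only [Real.rpow_natCast, Even.pow_abs (even_two_mul m)]
  calc ∫ y : ℝ, Real.exp (-(y ^ (2*m)))
      = ∫ y : ℝ, (fun u : ℝ => Real.exp (-(u ^ (((2*m : ℕ)):ℝ)))) |y| := by simp_rw [h1]
    _ = 2 * ∫ y in Ioi (0:ℝ), Real.exp (-(y ^ (((2*m : ℕ)):ℝ))) := integral_comp_abs (f := fun u : ℝ => Real.exp (-(u ^ (((2*m : ℕ)):ℝ))))
    _ = 2 * Real.Gamma (1/((2*m : ℕ):ℝ) + 1) := by rw [integral_exp_neg_rpow hp]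
    _ = Real.Gamma (1/(2*(m:ℝ))) / (m:ℝ) := by
        rw [Real.Gamma_add_one (one_div_ne_zero hp.ne')]
        push_cast
        field_simp

lemma key_tendsto_aux (m : ℕ) (hm : 1 ≤ m) (a : ℝ) (ha : 0 < a) (f : ℝ → ℝ)
    (hf : ContinuousOn f (Icc (-a) a)) :
    Tendsto (fun s : ℝ => ∫ y in (-(a/s))..(a/s), f (s*y) * Real.exp (-(y^(2*m))))
      (nhdsWithin 0 (Ioi 0)) (nhds (f 0 * (Real.Gamma (1/(2*(m:ℝ))) / m))) := by
  obtain ⟨C, hC⟩ := (isCompact_Icc (a := -a) (b := a)).exists_bound_of_continuousOn hf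
  have h0mem : (0:ℝ) ∈ Icc (-a) a := ⟨by linarith, by linarith⟩
  have hC0 : 0 ≤ C := le_trans (norm_nonneg _) (hC 0 h0mem)
  have hcont0 : ContinuousAt f 0 := hf.continuousAt (Icc_mem_nhds (by linarith) ha)
  have hmain : Tendsto
      (fun s : ℝ => ∫ y : ℝ,
        (Ioc (-(a/s)) (a/s)).indicator (fun y => f (s*y) * Real.exp (-(y^(2*m)))) y)
      (nhdsWithin 0 (Ioi 0)) (nhds (∫ y : ℝ, f 0 * Real.exp (-(y^(2*m))))) := by
    apply tendsto_integral_filter_of_dominated_convergence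
      (fun y : ℝ => C * Real.exp (-(y^(2*m))))
    · filter_upwards [self_mem_nhdsWithin] with s hs
      have hs : (0:ℝ) < s := hs
      apply (aestronglyMeasurable_indicator_iff measurableSet_Ioc).mpr
      apply ContinuousOn.aestronglyMeasurable ?_ measurableSet_Ioc
      apply ContinuousOn.mul
      · apply hf.comp (continuous_const.mul continuous_id).continuousOn
        intro y hy
        obtain ⟨hy1, hy2⟩ := hy
        constructor
        · have h := (div_lt_iff₀ hs).mp (by rw [neg_div]; exact hy1 : (-a)/s < y)
          simpa [mul_comm] using h.le
        · have h := (le_div_iff₀ hs).mp hy2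
          simpa [mul_comm] using h
      · exact (Real.continuous_exp.comp (continuous_pow (2*m)).neg).continuousOn
    · filter_upwards [self_mem_nhdsWithin] with s hs
      have hs : (0:ℝ) < s := hs
      filter_upwards with y
      by_cases hy : y ∈ Ioc (-(a/s)) (a/s)
      · rw [indicator_of_mem hy]
        have hmem2 : s*y ∈ Icc (-a) a := by
          obtain ⟨hy1, hy2⟩ := hy
          constructor
          · have h := (div_lt_iff₀ hs).mp (by rw [neg_div]; exact hy1 : (-a)/s < y)
            nlinarith
          · have h := (le_div_iff₀ hs).mp hy2
            nlinarith
        rw [Real.norm_eq_abs, abs_mul, Real.abs_exp]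
        apply mul_le_mul_of_nonneg_right ?_ (Real.exp_nonneg _)
        exact (Real.norm_eq_abs _).symm ▸ hC _ hmem2
      · rw [indicator_of_notMem hy]
        simp only [norm_zero]
        positivity
    · exact (integrable_exp_neg_pow_aux m hm).const_mul C
    · filter_upwards with y
      have hb : (0:ℝ) < a/(|y|+1) := by positivity
      have hev : ∀ᶠ s in nhdsWithin (0:ℝ) (Ioi 0),
          (Ioc (-(a/s)) (a/s)).indicator (fun y => f (s*y) * Real.exp (-(y^(2*m)))) y
            = f (s*y) * Real.exp (-(y^(2*m))) := by
        filter_upwards [Ioo_mem_nhdsGT_of_mem (⟨le_refl 0, hb⟩ : (0:ℝ) ∈ Ico 0 (a/(|y|+1)))]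
          with s hs
        obtain ⟨hs1, hs2⟩ := hs
        have h1 : s * (|y|+1) < a := (lt_div_iff₀ (by positivity)).mp hs2
        have hmem : y ∈ Ioc (-(a/s)) (a/s) := by
          constructor
          · rw [neg_lt]
            exact (lt_div_iff₀ hs1).mpr (by nlinarith [neg_le_abs y, abs_nonneg y])
          · exact (le_div_iff₀ hs1).mpr (by nlinarith [le_abs_self y, abs_nonneg y])
        rw [indicator_of_mem hmem]
      have ht1 : Tendsto (fun s : ℝ => s * y) (nhdsWithin 0 (Ioi 0)) (nhds 0) := by
        have h : Tendsto (fun s : ℝ => s * y) (nhds 0) (nhds (0 * y)) :=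
          (continuous_id.mul continuous_const).tendsto 0
        rw [zero_mul] at h
        exact h.mono_left nhdsWithin_le_nhds
      exact ((hcont0.tendsto.comp ht1).mul tendsto_const_nhds).congr'
        (by filter_upwards [hev] with s h; exact h.symm)
  have hval : ∫ y : ℝ, f 0 * Real.exp (-(y^(2*m)))
      = f 0 * (Real.Gamma (1/(2*(m:ℝ))) / m) := by
    rw [integral_const_mul, integral_exp_neg_pow_aux m hm]
  rw [hval] at hmain
  apply hmain.congr'
  filter_upwards [self_mem_nhdsWithin] with s hs
  have hs : (0:ℝ) < s := hs
  have hle : -(a/s) ≤ a/s := by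
    have : 0 < a/s := by positivity
    linarith
  rw [integral_indicator measurableSet_Ioc, intervalIntegral.integral_of_le hle]

/-- One-dimensional Laplace asymptotics with continuous amplitude: for continuous
`f` on `[-a,a]` and `m ≥ 1`,
`t^{-1/(2m)} ∫_{-a}^{a} f(x) e^{-x^{2m}/t} dx → f(0)·Γ(1/(2m))/m` as `t → 0⁺`. -/
theorem laplace_asymptotic_one_dim_amplitude (m : ℕ) (hm : 1 ≤ m) (a : ℝ) (ha : 0 < a)
    (f : ℝ → ℝ) (hf : ContinuousOn f (Set.Icc (-a) a)) :
    Tendsto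
      (fun t : ℝ =>
        t ^ (-(1 / (2 * (m : ℝ)))) * ∫ x in (-a)..a, f x * Real.exp (-(x ^ (2 * m)) / t))
      (nhdsWithin 0 (Set.Ioi 0))
      (nhds (f 0 * (Real.Gamma (1 / (2 * (m : ℝ))) / m))) := by
  have hm' : (0:ℝ) < m := by exact_mod_cast hm
  set p : ℝ := 1 / (2 * (m:ℝ)) with hp
  have hppos : 0 < p := by rw [hp]; positivity
  have hcomp : Tendsto (fun t : ℝ => t ^ p) (nhdsWithin 0 (Ioi 0)) (nhdsWithin 0 (Ioi 0)) := by
    rw [tendsto_nhdsWithin_iff]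
    constructor
    · have h : Tendsto (fun t : ℝ => t ^ p) (nhds 0) (nhds ((0:ℝ) ^ p)) :=
        (Real.continuousAt_rpow_const 0 p (Or.inr hppos.le)).tendsto
      rw [Real.zero_rpow hppos.ne'] at h
      exact h.mono_left nhdsWithin_le_nhds
    · filter_upwards [self_mem_nhdsWithin] with t ht
      exact Real.rpow_pos_of_pos ht _
  have := (key_tendsto_aux m hm a ha f hf).comp hcomp
  apply this.congr'
  filter_upwards [self_mem_nhdsWithin] with t ht
  have ht : (0:ℝ) < t := ht
  set s := t ^ p with hs
  have hs0 : 0 < s := Real.rpow_pos_of_pos ht _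
  have hst : s ^ (2*m) = t := by
    rw [hs, ← Real.rpow_natCast (t ^ p) (2*m), ← Real.rpow_mul ht.le]
    have h1 : p * ((2*m : ℕ):ℝ) = 1 := by
      rw [hp]; push_cast; field_simp
    rw [h1, Real.rpow_one]
  have h2 : ∀ y : ℝ, f (s*y) * Real.exp (-((s*y) ^ (2*m)) / t)
      = f (s*y) * Real.exp (-(y^(2*m))) := by
    intro y
    rw [mul_pow, hst, neg_div, mul_div_cancel_left₀ _ ht.ne']
  have h3 := intervalIntegral.smul_integral_comp_mul_left
    (fun x => f x * Real.exp (-(x ^ (2*m)) / t)) s (a := -(a/s)) (b := a/s)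
  rw [mul_neg, mul_div_cancel₀ a hs0.ne'] at h3
  show (∫ y in (-(a/s))..(a/s), f (s*y) * Real.exp (-(y^(2*m))))
      = t ^ (-p) * ∫ x in (-a)..a, f x * Real.exp (-(x ^ (2*m)) / t)
  rw [Real.rpow_neg ht.le, ← hs, ← h3, smul_eq_mul, inv_mul_cancel_left₀ hs0.ne']
  simp_rw [h2]
end

section
/- Let g(x) = Σ_{i=1}^{n} x_i^{2m_i} on a box D = [-a,a]ⁿ with integers 1 ≤ m₁ ≤ ⋯ ≤ m_n, and let f be continuous on D. Then lim_{t→0⁺} t^{-(1/(2m₁)+⋯+1/(2m_n))} ∫_D f(x) e^{-g(x)/t} dx = f(0) · ∏_{i=1}^n Γ(1/(2m_i))/m_i. -/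
open Real Filter Set MeasureTheory

lemma laplace_aux_integrable (m : ℕ) (hm : 1 ≤ m) :
    Integrable (fun y : ℝ => Real.exp (-(y ^ (2 * m)))) := by
  have hcont : Continuous (fun y : ℝ => Real.exp (-(y ^ (2 * m)))) := by continuity
  refine (((integrable_exp_neg_mul_sq one_pos).const_mul (Real.exp 1)).mono'
    hcont.aestronglyMeasurable (Eventually.of_forall fun y => ?_))
  rw [Real.norm_eq_abs, abs_of_pos (Real.exp_pos _), ← Real.exp_add]
  apply Real.exp_le_exp.2
  have h1 : y ^ (2 * m) = (y ^ 2) ^ m := by rw [pow_mul]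
  have h2 : (0:ℝ) ≤ y ^ 2 := sq_nonneg y
  rcases le_total (y ^ 2) 1 with h | h
  · nlinarith [pow_nonneg h2 m]
  · nlinarith [le_self_pow₀ h (by omega : m ≠ 0)]

lemma laplace_aux_integral (m : ℕ) (hm : 1 ≤ m) :
    ∫ y : ℝ, Real.exp (-(y ^ (2 * m))) = Real.Gamma (1 / (2 * (m : ℝ))) / m := by
  have hmR : (0:ℝ) < (m:ℝ) := by exact_mod_cast hm
  have hp : (0:ℝ) < 2 * (m:ℝ) := by linarith
  have hint := laplace_aux_integrable m hm
  have hsplit := intervalIntegral.integral_Iic_add_Ioi (b := (0:ℝ))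
    hint.integrableOn hint.integrableOn
  have heven : ∀ y : ℝ, Real.exp (-((-y) ^ (2 * m))) = Real.exp (-(y ^ (2 * m))) := by
    intro y; rw [Even.neg_pow (even_two_mul m)]
  have hIic : (∫ y in Iic (0:ℝ), Real.exp (-(y ^ (2 * m))))
      = ∫ y in Ioi (0:ℝ), Real.exp (-(y ^ (2 * m))) := by
    calc (∫ y in Iic (0:ℝ), Real.exp (-(y ^ (2 * m))))
        = ∫ y in Iic (0:ℝ), Real.exp (-((-y) ^ (2 * m))) := by simp_rw [heven]
      _ = ∫ y in Ioi (-(0:ℝ)), Real.exp (-(y ^ (2 * m))) :=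
          integral_comp_neg_Iic (0:ℝ) (fun y : ℝ => Real.exp (-(y ^ (2 * m))))
      _ = ∫ y in Ioi (0:ℝ), Real.exp (-(y ^ (2 * m))) := by rw [neg_zero]
  have hIoi : (∫ y in Ioi (0:ℝ), Real.exp (-(y ^ (2 * m))))
      = Real.Gamma (1 / (2 * (m : ℝ)) + 1) := by
    rw [← integral_exp_neg_rpow hp]
    apply MeasureTheory.setIntegral_congr_fun measurableSet_Ioi
    intro y hy
    simp only
    rw [show (2 * (m:ℝ)) = ((2 * m : ℕ) : ℝ) by push_cast; ring, Real.rpow_natCast]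
  rw [← hsplit, hIic, hIoi, Real.Gamma_add_one (by positivity)]
  field_simp
  ring

lemma laplace_oneD (m : ℕ) (hm : 1 ≤ m) (b : ℝ) (hb : 0 < b) :
    Tendsto (fun t : ℝ => t ^ (-(1 / (2 * (m : ℝ)))) * ∫ x in Icc (-b) b, Real.exp (-(x ^ (2 * m)) / t))
      (nhdsWithin 0 (Ioi 0)) (nhds (Real.Gamma (1 / (2 * (m : ℝ))) / m)) := by
  set α : ℝ := 1 / (2 * (m : ℝ)) with hα
  have hmR : (0:ℝ) < (m:ℝ) := by exact_mod_cast hm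
  have hα0 : 0 < α := by positivity
  set R : ℝ → ℝ := fun t => b * t ^ (-α) with hR
  have hRtop : Tendsto R (nhdsWithin 0 (Ioi 0)) atTop := by
    apply Tendsto.const_mul_atTop hb
    have h1 : Tendsto (fun t : ℝ => t⁻¹ ^ α) (nhdsWithin 0 (Ioi 0)) atTop :=
      (tendsto_rpow_atTop hα0).comp tendsto_inv_nhdsGT_zero
    apply h1.congr'
    filter_upwards [self_mem_nhdsWithin] with t ht
    rw [← Real.rpow_neg_one, ← Real.rpow_mul (le_of_lt ht), neg_one_mul]
  have hG : Tendsto (fun t : ℝ => ∫ y in (-(R t))..(R t), Real.exp (-(y ^ (2 * m))))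
      (nhdsWithin 0 (Ioi 0)) (nhds (Real.Gamma α / m)) := by
    rw [← laplace_aux_integral m hm]
    exact intervalIntegral_tendsto_integral (laplace_aux_integrable m hm)
      (tendsto_neg_atTop_atBot.comp hRtop) hRtop
  apply hG.congr'
  filter_upwards [self_mem_nhdsWithin] with t ht
  have ht0 : (0:ℝ) < t := ht
  set c : ℝ := t ^ α with hcd
  have hc : 0 < c := Real.rpow_pos_of_pos ht0 α
  have hct : c ^ (2 * m) = t := by
    rw [← Real.rpow_natCast c (2 * m), hcd, ← Real.rpow_mul ht0.le]
    rw [show α * ((2 * m : ℕ) : ℝ) = 1 by push_cast [hα]; field_simp]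
    exact Real.rpow_one t
  have hkey : ∀ y : ℝ, Real.exp (-((c * y) ^ (2 * m)) / t) = Real.exp (-(y ^ (2 * m))) := by
    intro y
    rw [mul_pow, hct]
    congr 1
    field_simp
  have hcR : c * R t = b := by
    rw [hR]
    simp only
    rw [mul_comm b, ← mul_assoc, hcd, ← Real.rpow_add ht0, add_neg_cancel, Real.rpow_zero, one_mul]
  have hIcc : (∫ x in Icc (-b) b, Real.exp (-(x ^ (2 * m)) / t))
      = ∫ x in (-b)..b, Real.exp (-(x ^ (2 * m)) / t) := by
    rw [intervalIntegral.integral_of_le (by linarith), MeasureTheory.integral_Icc_eq_integral_Ioc]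
  have hsub := intervalIntegral.integral_comp_mul_left
    (f := fun x : ℝ => Real.exp (-(x ^ (2 * m)) / t)) (a := -(R t)) (b := R t) (c := c) hc.ne'
  simp only [hkey] at hsub
  rw [mul_neg, hcR] at hsub
  rw [hIcc, hsub, smul_eq_mul, hcd, ← Real.rpow_neg ht0.le]

lemma laplace_boxD (n : ℕ) (m : Fin n → ℕ) (hm : ∀ i, 1 ≤ m i) (b : ℝ) (hb : 0 < b) :
    Tendsto (fun t : ℝ => t ^ (-(∑ i, 1 / (2 * (m i : ℝ)))) *
        ∫ x in Set.pi Set.univ (fun _ : Fin n => Icc (-b) b),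
          Real.exp (-(∑ i, x i ^ (2 * m i)) / t))
      (nhdsWithin 0 (Ioi 0)) (nhds (∏ i, Real.Gamma (1 / (2 * (m i : ℝ))) / m i)) := by
  have hlim : Tendsto (fun t : ℝ => ∏ i,
      (t ^ (-(1 / (2 * (m i : ℝ)))) * ∫ x in Icc (-b) b, Real.exp (-(x ^ (2 * m i)) / t)))
      (nhdsWithin 0 (Ioi 0)) (nhds (∏ i, Real.Gamma (1 / (2 * (m i : ℝ))) / m i)) :=
    tendsto_finset_prod _ (fun i _ => laplace_oneD (m i) (hm i) b hb)
  apply hlim.congr'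
  filter_upwards [self_mem_nhdsWithin] with t ht
  have ht0 : (0:ℝ) < t := ht
  have hpow : t ^ (-(∑ i, 1 / (2 * (m i : ℝ)))) = ∏ i, t ^ (-(1 / (2 * (m i : ℝ)))) := by
    rw [← Finset.sum_neg_distrib, Real.rpow_sum_of_pos ht0]
  have hsplit : ∀ x : Fin n → ℝ, Real.exp (-(∑ i, x i ^ (2 * m i)) / t)
      = ∏ i, Real.exp (-(x i ^ (2 * m i)) / t) := by
    intro x
    rw [← Real.exp_sum]
    congr 1
    rw [← Finset.sum_div, ← Finset.sum_neg_distrib]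
  have hmeas : MeasurableSet (Set.pi Set.univ (fun _ : Fin n => Icc (-b) b)) :=
    MeasurableSet.univ_pi (fun _ => measurableSet_Icc)
  have hint : (∫ x in Set.pi Set.univ (fun _ : Fin n => Icc (-b) b),
        Real.exp (-(∑ i, x i ^ (2 * m i)) / t))
      = ∏ i, ∫ x in Icc (-b) b, Real.exp (-(x ^ (2 * m i)) / t) := by
    rw [← MeasureTheory.integral_indicator hmeas]
    have heq : (Set.pi Set.univ (fun _ : Fin n => Icc (-b) b)).indicator
        (fun x => Real.exp (-(∑ i, x i ^ (2 * m i)) / t))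
        = fun x => ∏ i, (Icc (-b) b).indicator (fun y => Real.exp (-(y ^ (2 * m i)) / t)) (x i) := by
      ext x
      by_cases hx : x ∈ Set.pi Set.univ (fun _ : Fin n => Icc (-b) b)
      · rw [Set.indicator_of_mem hx, hsplit]
        exact Finset.prod_congr rfl fun i _ =>
          (Set.indicator_of_mem (hx i trivial) (fun y => Real.exp (-(y ^ (2 * m i)) / t))).symm
      · rw [Set.indicator_of_notMem hx]
        rw [Set.mem_univ_pi] at hx
        push_neg at hx
        obtain ⟨i, hi⟩ := hx
        exact (Finset.prod_eq_zero (Finset.mem_univ i) (Set.indicator_of_notMem hi _)).symm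
    rw [heq, MeasureTheory.integral_fintype_prod_volume_eq_prod]
    exact Finset.prod_congr rfl fun i _ => MeasureTheory.integral_indicator measurableSet_Icc
  rw [hpow, hint, ← Finset.prod_mul_distrib]

/-- Multidimensional Laplace asymptotics with diagonal monomial phase
`g(x) = Σ_i x_i^{2 m_i}` on the box `[-a,a]ⁿ`:
`t^{-Σ 1/(2mᵢ)} ∫_D f(x) e^{-g(x)/t} dx → f(0)·∏ Γ(1/(2mᵢ))/mᵢ` as `t → 0⁺`. -/
theorem laplace_asymptotic_multidim (n : ℕ) (m : Fin n → ℕ) (hm : ∀ i, 1 ≤ m i)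
    (hmono : ∀ i j : Fin n, i ≤ j → m i ≤ m j)
    (a : ℝ) (ha : 0 < a) (f : (Fin n → ℝ) → ℝ)
    (hf : ContinuousOn f (Set.pi Set.univ fun _ => Set.Icc (-a) a)) :
    Tendsto
      (fun t : ℝ =>
        t ^ (-(∑ i, 1 / (2 * (m i : ℝ)))) *
          ∫ x in Set.pi Set.univ (fun _ : Fin n => Set.Icc (-a) a),
            f x * Real.exp (-(∑ i, x i ^ (2 * m i)) / t))
      (nhdsWithin 0 (Set.Ioi 0))
      (nhds (f 0 * ∏ i, Real.Gamma (1 / (2 * (m i : ℝ))) / m i)) := by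
  set S : ℝ := ∑ i, 1 / (2 * (m i : ℝ)) with hSdef
  set P : ℝ := ∏ i, Real.Gamma (1 / (2 * (m i : ℝ))) / m i with hPdef
  have hP : 0 < P := by
    apply Finset.prod_pos
    intro i _
    have hmi : (0:ℝ) < (m i : ℝ) := by exact_mod_cast hm i
    exact div_pos (Real.Gamma_pos_of_pos (by positivity)) hmi
  set D : Set (Fin n → ℝ) := Set.pi Set.univ (fun _ : Fin n => Set.Icc (-a) a) with hDdef
  have hDmeas : MeasurableSet D := MeasurableSet.univ_pi (fun _ => measurableSet_Icc)
  have hDcomp : IsCompact D := isCompact_univ_pi (fun _ => isCompact_Icc)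
  have h0D : (0 : Fin n → ℝ) ∈ D := by
    intro i _
    exact ⟨by simp [ha.le], by simp [ha.le]⟩
  obtain ⟨M, hM⟩ := hDcomp.exists_bound_of_continuousOn hf
  have hM0 : (0:ℝ) ≤ M := le_trans (norm_nonneg _) (hM 0 h0D)
  have hg_cont : Continuous (fun x : Fin n → ℝ => ∑ i, x i ^ (2 * m i)) :=
    continuous_finset_sum _ (fun i _ => (continuous_apply i).pow _)
  -- the scaling map 2t
  have h2t : Tendsto (fun t : ℝ => 2 * t) (nhdsWithin 0 (Ioi 0)) (nhdsWithin 0 (Ioi 0)) := by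
    apply tendsto_nhdsWithin_of_tendsto_nhds_of_eventually_within
    · have h := ((by continuity : Continuous (fun t : ℝ => 2 * t)).tendsto (0:ℝ)).mono_left
        (nhdsWithin_le_nhds (s := Ioi (0:ℝ)))
      simpa using h
    · filter_upwards [self_mem_nhdsWithin] with t ht
      exact mul_pos two_pos (mem_Ioi.mp ht)
  rw [Metric.tendsto_nhds]
  intro ε hε
  set ε' : ℝ := ε / (2 * (P + 1)) with hε'def
  have hε' : 0 < ε' := by positivity
  obtain ⟨δ, hδ0, hδ⟩ := Metric.continuousWithinAt_iff.1 (hf 0 h0D) ε' hε'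
  set δ' : ℝ := min (min (δ / 2) a) 1 with hδ'def
  have hδ'0 : 0 < δ' := lt_min (lt_min (by linarith) ha) one_pos
  have hδ'a : δ' ≤ a := le_trans (min_le_left _ _) (min_le_right _ _)
  have hδ'1 : δ' ≤ 1 := min_le_right _ _
  have hδ'δ : δ' < δ := lt_of_le_of_lt (le_trans (min_le_left _ _) (min_le_left _ _)) (by linarith)
  set B : Set (Fin n → ℝ) := Set.pi Set.univ (fun _ : Fin n => Set.Icc (-δ') δ') with hBdef
  have hBD : B ⊆ D := by
    apply Set.pi_mono
    intro i _
    exact Set.Icc_subset_Icc (by linarith) hδ'a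
  have hBmeas : MeasurableSet B := MeasurableSet.univ_pi (fun _ => measurableSet_Icc)
  have hBcomp : IsCompact B := isCompact_univ_pi (fun _ => isCompact_Icc)
  have hfsmall : ∀ x ∈ B, |f x - f 0| ≤ ε' := by
    intro x hx
    have hdist : dist x 0 < δ := by
      refine lt_of_le_of_lt ((dist_pi_le_iff hδ'0.le).2 fun i => ?_) hδ'δ
      have hxi := hx i trivial
      rw [Set.mem_Icc] at hxi
      rw [Real.dist_eq]
      simpa [abs_le] using hxi
    have := hδ (hBD hx) hdist
    rw [Real.dist_eq] at this
    exact this.le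
  set K : ℕ := Finset.univ.sup m with hKdef
  set c : ℝ := δ' ^ (2 * K) with hcdef
  have hc : 0 < c := by positivity
  have hgc : ∀ x ∈ D \ B, c ≤ ∑ i, x i ^ (2 * m i) := by
    rintro x ⟨hxD, hxB⟩
    rw [hBdef, Set.mem_univ_pi] at hxB
    push_neg at hxB
    obtain ⟨i, hi⟩ := hxB
    rw [Set.mem_Icc] at hi
    have h1 : δ' ≤ |x i| := by
      rw [le_abs]
      by_contra hcon
      push_neg at hcon
      exact hi ⟨by linarith [hcon.2], by linarith [hcon.1]⟩
    calc c ≤ δ' ^ (2 * m i) :=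
          pow_le_pow_of_le_one hδ'0.le hδ'1 (by have := Finset.le_sup (f := m) (Finset.mem_univ i); omega)
      _ ≤ |x i| ^ (2 * m i) := pow_le_pow_left₀ hδ'0.le h1 _
      _ = x i ^ (2 * m i) := Even.pow_abs (even_two_mul _) _
      _ ≤ ∑ j, x j ^ (2 * m j) :=
          Finset.single_le_sum (f := fun j => x j ^ (2 * m j))
            (fun j _ => Even.pow_nonneg (even_two_mul _) _) (Finset.mem_univ i)
  -- limit facts
  have hLlim : Tendsto (fun t : ℝ => t ^ (-S) * ∫ x in B, Real.exp (-(∑ i, x i ^ (2 * m i)) / t))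
      (nhdsWithin 0 (Ioi 0)) (nhds P) := laplace_boxD n m hm δ' hδ'0
  have hQlim : Tendsto (fun t : ℝ => t ^ (-S) * ∫ x in D, Real.exp (-(∑ i, x i ^ (2 * m i)) / (2 * t)))
      (nhdsWithin 0 (Ioi 0)) (nhds ((2:ℝ) ^ S * P)) := by
    have h0 := ((laplace_boxD n m hm a ha).comp h2t).const_mul ((2:ℝ) ^ S)
    apply h0.congr'
    filter_upwards [self_mem_nhdsWithin] with t ht
    have ht0 : (0:ℝ) < t := ht
    simp only [Function.comp]
    rw [Real.mul_rpow (by norm_num) ht0.le, ← mul_assoc, ← mul_assoc,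
      ← Real.rpow_add two_pos, add_neg_cancel, Real.rpow_zero, one_mul]
  have hexp : Tendsto (fun t : ℝ => Real.exp (-c / (2 * t))) (nhdsWithin 0 (Ioi 0)) (nhds 0) := by
    have h1 : Tendsto (fun t : ℝ => c * (2 * t)⁻¹) (nhdsWithin 0 (Ioi 0)) atTop :=
      (tendsto_inv_nhdsGT_zero.comp h2t).const_mul_atTop hc
    have h2 := Real.tendsto_exp_atBot.comp (tendsto_neg_atTop_atBot.comp h1)
    apply h2.congr
    intro t
    simp only [Function.comp]
    rw [neg_div, div_eq_mul_inv]
  set RHS : ℝ → ℝ := fun t =>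
      ε' * (t ^ (-S) * ∫ x in B, Real.exp (-(∑ i, x i ^ (2 * m i)) / t)) +
      M * Real.exp (-c / (2 * t)) * (t ^ (-S) * ∫ x in D, Real.exp (-(∑ i, x i ^ (2 * m i)) / (2 * t))) +
      |f 0| * |(t ^ (-S) * ∫ x in B, Real.exp (-(∑ i, x i ^ (2 * m i)) / t)) - P| with hRHSdef
  have hRHSlim : Tendsto RHS (nhdsWithin 0 (Ioi 0))
      (nhds (ε' * P + M * 0 * ((2:ℝ) ^ S * P) + |f 0| * |P - P|)) := by
    exact ((hLlim.const_mul ε').add (((hexp.const_mul M).mul hQlim))).add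
      (((hLlim.sub tendsto_const_nhds).abs).const_mul (|f 0|))
  have hval : ε' * P + M * 0 * ((2:ℝ) ^ S * P) + |f 0| * |P - P| < ε := by
    rw [sub_self, abs_zero]
    have hkey : ε' * (P + 1) = ε / 2 := by
      rw [hε'def]
      field_simp
    nlinarith
  have hev1 : ∀ᶠ t in nhdsWithin 0 (Ioi 0), RHS t < ε := hRHSlim.eventually_lt_const hval
  filter_upwards [hev1, self_mem_nhdsWithin] with t hlt ht
  have ht0 : (0:ℝ) < t := ht
  rw [Real.dist_eq]
  refine lt_of_le_of_lt ?_ hlt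
  -- pointwise estimate for fixed t
  have htS : 0 < t ^ (-S) := Real.rpow_pos_of_pos ht0 _
  have he_cont : Continuous (fun x : Fin n → ℝ => Real.exp (-(∑ i, x i ^ (2 * m i)) / t)) :=
    ((hg_cont.neg).div_const t).rexp
  have he2_cont : Continuous (fun x : Fin n → ℝ => Real.exp (-(∑ i, x i ^ (2 * m i)) / (2 * t))) :=
    ((hg_cont.neg).div_const (2 * t)).rexp
  have hIfe : IntegrableOn (fun x => f x * Real.exp (-(∑ i, x i ^ (2 * m i)) / t)) D :=
    (hf.mul he_cont.continuousOn).integrableOn_compact hDcomp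
  have hIfe_B : IntegrableOn (fun x => f x * Real.exp (-(∑ i, x i ^ (2 * m i)) / t)) B :=
    hIfe.mono_set hBD
  have hIe_B : IntegrableOn (fun x => Real.exp (-(∑ i, x i ^ (2 * m i)) / t)) B :=
    he_cont.continuousOn.integrableOn_compact hBcomp
  have hIe2_D : IntegrableOn (fun x => Real.exp (-(∑ i, x i ^ (2 * m i)) / (2 * t))) D :=
    he2_cont.continuousOn.integrableOn_compact hDcomp
  have hsplit : (∫ x in D, f x * Real.exp (-(∑ i, x i ^ (2 * m i)) / t))
      = (∫ x in B, f x * Real.exp (-(∑ i, x i ^ (2 * m i)) / t)) +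
        ∫ x in D \ B, f x * Real.exp (-(∑ i, x i ^ (2 * m i)) / t) := by
    rw [← MeasureTheory.integral_inter_add_diff hBmeas hIfe,
      Set.inter_eq_self_of_subset_right hBD]
  have hb1 : |(∫ x in B, f x * Real.exp (-(∑ i, x i ^ (2 * m i)) / t)) -
      f 0 * ∫ x in B, Real.exp (-(∑ i, x i ^ (2 * m i)) / t)|
      ≤ ε' * ∫ x in B, Real.exp (-(∑ i, x i ^ (2 * m i)) / t) := by
    have hIsub : IntegrableOn (fun x => (f x - f 0) * Real.exp (-(∑ i, x i ^ (2 * m i)) / t)) B := by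
      simp_rw [sub_mul]
      exact hIfe_B.sub (hIe_B.const_mul _)
    have heq : (∫ x in B, f x * Real.exp (-(∑ i, x i ^ (2 * m i)) / t)) -
        f 0 * ∫ x in B, Real.exp (-(∑ i, x i ^ (2 * m i)) / t)
        = ∫ x in B, (f x - f 0) * Real.exp (-(∑ i, x i ^ (2 * m i)) / t) := by
      simp_rw [sub_mul]
      rw [MeasureTheory.integral_sub hIfe_B (hIe_B.const_mul _), MeasureTheory.integral_const_mul]
    rw [heq]
    have hIabs : IntegrableOn (fun x => |f x - f 0| * Real.exp (-(∑ i, x i ^ (2 * m i)) / t)) B := by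
      have h := hIsub.abs
      simpa only [abs_mul, Real.abs_exp, IntegrableOn] using h
    calc |∫ x in B, (f x - f 0) * Real.exp (-(∑ i, x i ^ (2 * m i)) / t)|
        ≤ ∫ x in B, |f x - f 0| * Real.exp (-(∑ i, x i ^ (2 * m i)) / t) := by
          simpa [Real.norm_eq_abs, abs_mul, Real.abs_exp] using
            MeasureTheory.norm_integral_le_integral_norm
              (μ := volume.restrict B) (fun x => (f x - f 0) * Real.exp (-(∑ i, x i ^ (2 * m i)) / t))
      _ ≤ ∫ x in B, ε' * Real.exp (-(∑ i, x i ^ (2 * m i)) / t) := by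
          apply MeasureTheory.setIntegral_mono_on hIabs (hIe_B.const_mul _) hBmeas
          intro x hx
          exact mul_le_mul_of_nonneg_right (hfsmall x hx) (Real.exp_pos _).le
      _ = ε' * ∫ x in B, Real.exp (-(∑ i, x i ^ (2 * m i)) / t) :=
          MeasureTheory.integral_const_mul _ _
  have hb2 : |∫ x in D \ B, f x * Real.exp (-(∑ i, x i ^ (2 * m i)) / t)|
      ≤ M * Real.exp (-c / (2 * t)) * ∫ x in D, Real.exp (-(∑ i, x i ^ (2 * m i)) / (2 * t)) := by
    have hIfe_DB : IntegrableOn (fun x => f x * Real.exp (-(∑ i, x i ^ (2 * m i)) / t)) (D \ B) :=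
      hIfe.mono_set diff_subset
    have hIabs2 : IntegrableOn (fun x => |f x| * Real.exp (-(∑ i, x i ^ (2 * m i)) / t)) (D \ B) := by
      have h := hIfe_DB.abs
      simpa only [abs_mul, Real.abs_exp, IntegrableOn] using h
    calc |∫ x in D \ B, f x * Real.exp (-(∑ i, x i ^ (2 * m i)) / t)|
        ≤ ∫ x in D \ B, |f x| * Real.exp (-(∑ i, x i ^ (2 * m i)) / t) := by
          simpa [Real.norm_eq_abs, abs_mul, Real.abs_exp] using
            MeasureTheory.norm_integral_le_integral_norm
              (μ := volume.restrict (D \ B)) (fun x => f x * Real.exp (-(∑ i, x i ^ (2 * m i)) / t))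
      _ ≤ ∫ x in D \ B, (M * Real.exp (-c / (2 * t))) * Real.exp (-(∑ i, x i ^ (2 * m i)) / (2 * t)) := by
          apply MeasureTheory.setIntegral_mono_on hIabs2
            ((hIe2_D.mono_set diff_subset).const_mul _) (hDmeas.diff hBmeas)
          intro x hx
          have hgx := hgc x hx
          have hfx : |f x| ≤ M := by
            have := hM x hx.1
            rwa [Real.norm_eq_abs] at this
          have hee : Real.exp (-(∑ i, x i ^ (2 * m i)) / t)
              = Real.exp (-(∑ i, x i ^ (2 * m i)) / (2 * t)) *
                Real.exp (-(∑ i, x i ^ (2 * m i)) / (2 * t)) := by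
            rw [← Real.exp_add]
            congr 1
            field_simp
            ring
          rw [hee, ← mul_assoc]
          refine mul_le_mul_of_nonneg_right ?_ (Real.exp_pos _).le
          refine mul_le_mul hfx ?_ (Real.exp_pos _).le hM0
          apply Real.exp_le_exp.2
          exact (div_le_div_iff_of_pos_right (by positivity)).2 (neg_le_neg hgx)
      _ ≤ ∫ x in D, (M * Real.exp (-c / (2 * t))) * Real.exp (-(∑ i, x i ^ (2 * m i)) / (2 * t)) := by
          apply MeasureTheory.setIntegral_mono_set (hIe2_D.const_mul _)
            (Eventually.of_forall fun x => by positivity)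
            (HasSubset.Subset.eventuallyLE diff_subset)
      _ = M * Real.exp (-c / (2 * t)) * ∫ x in D, Real.exp (-(∑ i, x i ^ (2 * m i)) / (2 * t)) :=
          MeasureTheory.integral_const_mul _ _
  -- assemble
  have key : (t ^ (-S) * ∫ x in D, f x * Real.exp (-(∑ i, x i ^ (2 * m i)) / t)) - f 0 * P
      = t ^ (-S) * ((∫ x in B, f x * Real.exp (-(∑ i, x i ^ (2 * m i)) / t)) -
          f 0 * ∫ x in B, Real.exp (-(∑ i, x i ^ (2 * m i)) / t))
        + t ^ (-S) * (∫ x in D \ B, f x * Real.exp (-(∑ i, x i ^ (2 * m i)) / t))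
        + f 0 * ((t ^ (-S) * ∫ x in B, Real.exp (-(∑ i, x i ^ (2 * m i)) / t)) - P) := by
    rw [hsplit]
    ring
  rw [key, hRHSdef]
  calc |_| ≤ |t ^ (-S) * ((∫ x in B, f x * Real.exp (-(∑ i, x i ^ (2 * m i)) / t)) -
          f 0 * ∫ x in B, Real.exp (-(∑ i, x i ^ (2 * m i)) / t))|
        + |t ^ (-S) * (∫ x in D \ B, f x * Real.exp (-(∑ i, x i ^ (2 * m i)) / t))|
        + |f 0 * ((t ^ (-S) * ∫ x in B, Real.exp (-(∑ i, x i ^ (2 * m i)) / t)) - P)| :=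
      (abs_add_le _ _).trans (add_le_add_left (abs_add_le _ _) _)
  _ ≤ ε' * (t ^ (-S) * ∫ x in B, Real.exp (-(∑ i, x i ^ (2 * m i)) / t)) +
      M * Real.exp (-c / (2 * t)) * (t ^ (-S) * ∫ x in D, Real.exp (-(∑ i, x i ^ (2 * m i)) / (2 * t))) +
      |f 0| * |(t ^ (-S) * ∫ x in B, Real.exp (-(∑ i, x i ^ (2 * m i)) / t)) - P| := by
      simp only [abs_mul, abs_of_pos htS]
      refine add_le_add (add_le_add ?_ ?_) le_rfl
      · calc t ^ (-S) * |(∫ x in B, f x * Real.exp (-(∑ i, x i ^ (2 * m i)) / t)) -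
            f 0 * ∫ x in B, Real.exp (-(∑ i, x i ^ (2 * m i)) / t)|
            ≤ t ^ (-S) * (ε' * ∫ x in B, Real.exp (-(∑ i, x i ^ (2 * m i)) / t)) :=
              mul_le_mul_of_nonneg_left hb1 htS.le
          _ = ε' * (t ^ (-S) * ∫ x in B, Real.exp (-(∑ i, x i ^ (2 * m i)) / t)) := by ring
      · calc t ^ (-S) * |∫ x in D \ B, f x * Real.exp (-(∑ i, x i ^ (2 * m i)) / t)|
            ≤ t ^ (-S) * (M * Real.exp (-c / (2 * t)) *
                ∫ x in D, Real.exp (-(∑ i, x i ^ (2 * m i)) / (2 * t))) :=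
              mul_le_mul_of_nonneg_left hb2 htS.le
          _ = M * Real.exp (-c / (2 * t)) *
              (t ^ (-S) * ∫ x in D, Real.exp (-(∑ i, x i ^ (2 * m i)) / (2 * t))) := by ring
end

section
/- Define 𝓔 : ℝ × ℝ → ℝ² (Grushin exponential map from q₀ = (-1, -π/4)) for sin θ ≠ 0 by x(t,θ) = -sin(θ - t sin θ)/sin θ and y(t,θ) = -π/4 + (1/(4 sin θ))(2t - 2cos θ + sin(2θ - 2t sin θ)/sin θ). Then 𝓔(π, π/2) = (1, π/4) and ∂𝓔/∂θ (π, π/2) = (0, 0). -/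
open Real

/-- The Grushin exponential map from `q₀ = (-1,-π/4)`. -/
noncomputable def grushinExp (t θ : ℝ) : ℝ × ℝ :=
  (-Real.sin (θ - t * Real.sin θ) / Real.sin θ,
   -π / 4 + (1 / (4 * Real.sin θ)) *
     (2 * t - 2 * Real.cos θ + Real.sin (2 * θ - 2 * t * Real.sin θ) / Real.sin θ))

lemma aux_e1 : π / 2 - π * Real.sin (π / 2) = -(π / 2) := by
  rw [Real.sin_pi_div_two]; ring

lemma aux_e2 : 2 * (π / 2) - 2 * π * Real.sin (π / 2) = -π := by
  rw [Real.sin_pi_div_two]; ring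

lemma aux_fst : HasDerivAt (fun θ : ℝ => -Real.sin (θ - π * Real.sin θ) / Real.sin θ)
    0 (π / 2) := by
  have hinner : HasDerivAt (fun θ : ℝ => θ - π * Real.sin θ)
      (1 - π * Real.cos (π / 2)) (π / 2) :=
    (hasDerivAt_id _).sub ((Real.hasDerivAt_sin _).const_mul π)
  have hsin : HasDerivAt (fun θ : ℝ => Real.sin (θ - π * Real.sin θ))
      (Real.cos (π / 2 - π * Real.sin (π / 2)) * (1 - π * Real.cos (π / 2))) (π / 2) :=
    (Real.hasDerivAt_sin _).comp _ hinner
  have hnum := hsin.neg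
  have hden := Real.hasDerivAt_sin (π / 2)
  have hne : Real.sin (π / 2) ≠ 0 := by rw [Real.sin_pi_div_two]; norm_num
  have h := hnum.div hden hne
  convert h using 1
  all_goals try rfl
  rw [aux_e1]
  simp [Real.sin_neg, Real.cos_neg, Real.sin_pi_div_two, Real.cos_pi_div_two]

lemma aux_snd : HasDerivAt (fun θ : ℝ => -π / 4 + (1 / (4 * Real.sin θ)) *
    (2 * π - 2 * Real.cos θ + Real.sin (2 * θ - 2 * π * Real.sin θ) / Real.sin θ))
    0 (π / 2) := by
  have hne : Real.sin (π / 2) ≠ 0 := by rw [Real.sin_pi_div_two]; norm_num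
  have h4ne : (4 : ℝ) * Real.sin (π / 2) ≠ 0 := by rw [Real.sin_pi_div_two]; norm_num
  have h4s : HasDerivAt (fun θ : ℝ => 4 * Real.sin θ) (4 * Real.cos (π / 2)) (π / 2) :=
    (Real.hasDerivAt_sin _).const_mul 4
  have hB : HasDerivAt (fun θ : ℝ => 1 / (4 * Real.sin θ))
      ((0 * (4 * Real.sin (π / 2)) - 1 * (4 * Real.cos (π / 2))) /
        (4 * Real.sin (π / 2)) ^ 2) (π / 2) :=
    (hasDerivAt_const _ 1).div h4s h4ne
  have hinner : HasDerivAt (fun θ : ℝ => 2 * θ - 2 * π * Real.sin θ)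
      (2 * 1 - 2 * π * Real.cos (π / 2)) (π / 2) :=
    ((hasDerivAt_id _).const_mul 2).sub ((Real.hasDerivAt_sin _).const_mul (2 * π))
  have hsin2 : HasDerivAt (fun θ : ℝ => Real.sin (2 * θ - 2 * π * Real.sin θ))
      (Real.cos (2 * (π / 2) - 2 * π * Real.sin (π / 2)) *
        (2 * 1 - 2 * π * Real.cos (π / 2))) (π / 2) :=
    (Real.hasDerivAt_sin _).comp _ hinner
  have hquot := hsin2.div (Real.hasDerivAt_sin (π / 2)) hne
  have hA := ((hasDerivAt_const (π / 2) (2 * π)).sub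
    ((Real.hasDerivAt_cos _).const_mul 2)).add hquot
  have h := (hB.mul hA).const_add (-π / 4)
  convert h using 1
  all_goals try rfl
  rw [aux_e2]
  simp [Real.sin_neg, Real.cos_neg, Real.sin_pi_div_two, Real.cos_pi_div_two,
    Real.sin_pi, Real.cos_pi]

/-- The point `q₁ = (1,π/4)` is a critical value of the time-`π` Grushin exponential
map from `q₀ = (-1,-π/4)`: `𝓔(π,π/2) = (1,π/4)` and `∂𝓔/∂θ(π,π/2) = (0,0)`, so `q₁` is
conjugate to `q₀` along the geodesic with `θ = π/2`. -/
theorem grushin_conjugate_point :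
    grushinExp π (π / 2) = (1, π / 4) ∧
      deriv (fun θ => grushinExp π θ) (π / 2) = ((0 : ℝ), (0 : ℝ)) := by
  constructor
  · unfold grushinExp
    rw [aux_e1, aux_e2]
    simp [Real.sin_neg, Real.cos_neg, Real.sin_pi_div_two, Real.cos_pi_div_two,
      Real.sin_pi, Real.cos_pi]
    ring
  · have h : HasDerivAt (fun θ => grushinExp π θ) ((0 : ℝ), (0 : ℝ)) (π / 2) :=
      aux_fst.prodMk aux_snd
    exact h.deriv
end

section
/- Let g : ℝ² → ℝ be defined by g(u,v) = 8u² + (α/24)v⁴ + R(u,v) where α > 0 and R is a polynomial whose monomials all have total degree ≥ 5. Then lim_{t→0⁺} t^{-3/4} ∫_{[-δ,δ]²} e^{-g(u,v)/t} du dv = Γ(1/2)·Γ(1/4)·(8)^{-1/2}·(α/24)^{-1/4}/2 for sufficiently small δ > 0, i.e., the Laplace integral behaves like C·t^{1/2 + 1/4} = C·t^{3/4} with an explicit positive constant C. -/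
open Real Filter Set MvPolynomial

section LamAux

open MeasureTheory

/-- The rescaled, indicator-localized integrand. -/
noncomputable def lamF (g : ℝ → ℝ → ℝ) (δ : ℝ) (t : ℝ) (p : ℝ × ℝ) : ℝ :=
  (Ioc (-(δ / t ^ ((1:ℝ)/2))) (δ / t ^ ((1:ℝ)/2)) ×ˢ
    Ioc (-(δ / t ^ ((1:ℝ)/4))) (δ / t ^ ((1:ℝ)/4))).indicator
    (fun p => Real.exp (-g (t ^ ((1:ℝ)/2) * p.1) (t ^ ((1:ℝ)/4) * p.2) / t)) p

lemma lam_rpow_tendsto (q : ℝ) (hq : 0 < q) :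
    Tendsto (fun t : ℝ => t ^ q) (nhdsWithin 0 (Set.Ioi 0)) (nhds 0) := by
  have h := (Real.continuousAt_rpow_const 0 q (Or.inr hq.le)).tendsto
  rw [Real.zero_rpow (ne_of_gt hq)] at h
  exact h.mono_left nhdsWithin_le_nhds

lemma lam_c_sq (t : ℝ) (ht : 0 < t) : (t ^ ((1:ℝ)/2)) ^ 2 = t := by
  rw [← Real.rpow_natCast (t ^ ((1:ℝ)/2)) 2, ← Real.rpow_mul ht.le]; norm_num

lemma lam_c_four (t : ℝ) (ht : 0 < t) : (t ^ ((1:ℝ)/4)) ^ 4 = t := by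
  rw [← Real.rpow_natCast (t ^ ((1:ℝ)/4)) 4, ← Real.rpow_mul ht.le]; norm_num

lemma lam_poly_bound (R : MvPolynomial (Fin 2) ℝ)
    (hR : ∀ d ∈ R.support, 5 ≤ d.sum fun _ e => e) :
    ∃ C : ℝ, 0 ≤ C ∧ ∀ u v : ℝ, u ^ 2 + v ^ 4 ≤ 1 →
      |MvPolynomial.eval ![u, v] R| ≤ C * (u ^ 2 + v ^ 4) ^ ((5 : ℝ)/4) := by
  refine ⟨∑ d ∈ R.support, |MvPolynomial.coeff d R|,
    Finset.sum_nonneg fun _ _ => abs_nonneg _, fun u v hs1 => ?_⟩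
  have hs0 : (0:ℝ) ≤ u ^ 2 + v ^ 4 := by positivity
  set s : ℝ := u ^ 2 + v ^ 4 with hs
  rw [MvPolynomial.eval_eq']
  refine (Finset.abs_sum_le_sum_abs _ _).trans ?_
  rw [Finset.sum_mul]
  refine Finset.sum_le_sum fun d hd => ?_
  rw [abs_mul]
  refine mul_le_mul_of_nonneg_left ?_ (abs_nonneg _)
  have hprod : (∏ i, ![u, v] i ^ d i) = u ^ d 0 * v ^ d 1 := by
    rw [Fin.prod_univ_two]; simp
  have h5 : 5 ≤ d 0 + d 1 := by
    have := hR d hd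
    rwa [Finsupp.sum_fintype _ _ (fun _ => rfl), Fin.sum_univ_two] at this
  rw [hprod, abs_mul, abs_pow, abs_pow]
  have hu : |u| ^ d 0 ≤ s ^ ((d 0 : ℝ)/2) := by
    have h1 : |u| ≤ s ^ ((1:ℝ)/2) := by
      rw [← Real.sqrt_eq_rpow]
      calc |u| = Real.sqrt (u ^ 2) := (Real.sqrt_sq_eq_abs u).symm
      _ ≤ Real.sqrt s := Real.sqrt_le_sqrt (by rw [hs]; nlinarith [sq_nonneg (v^2)])
    calc |u| ^ d 0 ≤ (s ^ ((1:ℝ)/2)) ^ d 0 := pow_le_pow_left₀ (abs_nonneg u) h1 _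
    _ = s ^ ((d 0 : ℝ)/2) := by
        rw [← Real.rpow_natCast (s ^ ((1:ℝ)/2)) (d 0), ← Real.rpow_mul hs0]; ring_nf
  have hv : |v| ^ d 1 ≤ s ^ ((d 1 : ℝ)/4) := by
    have h1 : |v| ≤ s ^ ((1:ℝ)/4) := by
      have h4 : |v| ^ (4:ℕ) ≤ s := by
        rw [pow_abs]; rw [abs_of_nonneg (by positivity : (0:ℝ) ≤ v ^ 4)]
        nlinarith [sq_nonneg u]
      calc |v| = (|v| ^ (4:ℕ)) ^ ((1:ℝ)/4) := by
            rw [← Real.rpow_natCast (|v|) 4, ← Real.rpow_mul (abs_nonneg v)]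
            norm_num
      _ ≤ s ^ ((1:ℝ)/4) := Real.rpow_le_rpow (by positivity) h4 (by norm_num)
    calc |v| ^ d 1 ≤ (s ^ ((1:ℝ)/4)) ^ d 1 := pow_le_pow_left₀ (abs_nonneg v) h1 _
    _ = s ^ ((d 1 : ℝ)/4) := by
        rw [← Real.rpow_natCast (s ^ ((1:ℝ)/4)) (d 1), ← Real.rpow_mul hs0]; ring_nf
  calc |u| ^ d 0 * |v| ^ d 1 ≤ s ^ ((d 0 : ℝ)/2) * s ^ ((d 1 : ℝ)/4) :=
        mul_le_mul hu hv (by positivity) (by positivity)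
  _ = s ^ ((d 0 : ℝ)/2 + (d 1 : ℝ)/4) := by
      have hd5 : (5:ℝ)/4 ≤ (d 0 : ℝ)/2 + (d 1 : ℝ)/4 := by
        have h1 : (5:ℝ) ≤ (d 0 : ℝ) + (d 1 : ℝ) := by exact_mod_cast h5
        have h0' : (0:ℝ) ≤ (d 0:ℝ) := Nat.cast_nonneg _
        linarith
      rw [← Real.rpow_add' hs0 (by linarith : (d 0 : ℝ)/2 + (d 1 : ℝ)/4 ≠ 0)]
  _ ≤ s ^ ((5:ℝ)/4) := by
      have hd5 : (5:ℝ)/4 ≤ (d 0 : ℝ)/2 + (d 1 : ℝ)/4 := by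
        have h1 : (5:ℝ) ≤ (d 0 : ℝ) + (d 1 : ℝ) := by exact_mod_cast h5
        have h0' : (0:ℝ) ≤ (d 0:ℝ) := Nat.cast_nonneg _
        linarith
      rcases eq_or_lt_of_le hs0 with h0 | h0
      · rw [← h0, Real.zero_rpow (by linarith : (d 0 : ℝ)/2 + (d 1 : ℝ)/4 ≠ 0),
          Real.zero_rpow (by norm_num : (5:ℝ)/4 ≠ 0)]
      · exact Real.rpow_le_rpow_of_exponent_ge h0 hs1 hd5

lemma lam_int_quartic (b : ℝ) (hb : 0 < b) :
    Integrable (fun y : ℝ => Real.exp (-b * y ^ 4)) := by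
  refine ((integrable_exp_neg_mul_sq hb).const_mul (Real.exp b)).mono
    ((Real.continuous_exp.comp (by continuity)).aestronglyMeasurable) ?_
  filter_upwards with y
  rw [Real.norm_eq_abs, Real.norm_eq_abs, abs_of_pos (Real.exp_pos _), ← Real.exp_add,
    abs_of_pos (Real.exp_pos _), Real.exp_le_exp]
  nlinarith [sq_nonneg (y^2 - 1), sq_nonneg y, hb.le]

lemma lam_int_quartic_val (b : ℝ) (hb : 0 < b) :
    ∫ y : ℝ, Real.exp (-b * y ^ 4) = Real.Gamma (1/4) * b ^ (-(1/4 : ℝ)) / 2 := by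
  have habs : ∀ y : ℝ, |y| ^ (4:ℝ) = y ^ 4 := by
    intro y
    rw [show ((4:ℝ)) = ((4:ℕ):ℝ) by norm_num, Real.rpow_natCast, pow_abs,
      abs_of_nonneg (by positivity : (0:ℝ) ≤ y ^ 4)]
  calc ∫ y : ℝ, Real.exp (-b * y ^ 4) = ∫ y : ℝ, Real.exp (-b * |y| ^ (4:ℝ)) := by
        congr 1; funext y; rw [habs y]
    _ = 2 * ∫ x in Ioi (0:ℝ), Real.exp (-b * x ^ (4:ℝ)) :=
        integral_comp_abs (f := fun x => Real.exp (-b * x ^ (4:ℝ)))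
    _ = Real.Gamma (1/4) * b ^ (-(1/4 : ℝ)) / 2 := by
        rw [integral_exp_neg_mul_rpow (by norm_num) hb,
          Real.Gamma_add_one (by norm_num : (1:ℝ)/4 ≠ 0),
          show (-1/(4:ℝ)) = (-(1/4:ℝ)) by norm_num]
        ring

lemma lam_int_gauss_val : ∫ x : ℝ, Real.exp (-8 * x ^ 2)
    = Real.Gamma (1/2) * (8:ℝ) ^ (-(1/2 : ℝ)) := by
  rw [integral_gaussian, Real.Gamma_one_half_eq, Real.rpow_neg (by norm_num),
    ← Real.sqrt_eq_rpow, Real.sqrt_div (by positivity : (0:ℝ) ≤ π), div_eq_mul_inv]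

end LamAux

open MeasureTheory in
set_option maxHeartbeats 2000000 in
/-- Laplace asymptotics with mixed exponents `m₁ = 1`, `m₂ = 2`: if
`g(u,v) = 8u² + (α/24)v⁴ + R(u,v)` with `α > 0` and `R` a polynomial all of whose
monomials have total degree `≥ 5`, then for all sufficiently small `δ > 0`,
`t^{-3/4} ∫_{[-δ,δ]²} e^{-g/t} → Γ(1/2)·Γ(1/4)·8^{-1/2}·(α/24)^{-1/4}/2` as `t → 0⁺`. -/
theorem laplace_asymptotic_mixed_exponents (α : ℝ) (hα : 0 < α)
    (R : MvPolynomial (Fin 2) ℝ)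
    (hR : ∀ d ∈ R.support, 5 ≤ d.sum fun _ e => e)
    (g : ℝ → ℝ → ℝ)
    (hg : ∀ u v : ℝ, g u v = 8 * u ^ 2 + α / 24 * v ^ 4 + MvPolynomial.eval ![u, v] R) :
    ∃ δ₀ > 0, ∀ δ : ℝ, 0 < δ → δ ≤ δ₀ →
      Tendsto
        (fun t : ℝ =>
          t ^ (-(3 / 4 : ℝ)) * ∫ u in (-δ)..δ, ∫ v in (-δ)..δ, Real.exp (-g u v / t))
        (nhdsWithin 0 (Set.Ioi 0))
        (nhds (Real.Gamma (1 / 2) * Real.Gamma (1 / 4) *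
          (8 : ℝ) ^ (-(1 / 2 : ℝ)) * (α / 24) ^ (-(1 / 4 : ℝ)) / 2)) := by
  obtain ⟨C, hC0, hC⟩ := lam_poly_bound R hR
  set ε : ℝ := min 4 (α/48) with hεd
  have hε0 : 0 < ε := lt_min (by norm_num) (by positivity)
  have hε4 : ε ≤ 4 := min_le_left _ _
  have hε48 : ε ≤ α/48 := min_le_right _ _
  set δ₀ : ℝ := min (1/2) ((ε/(C+1))^4/2) with hδ₀d
  have hδ₀0 : 0 < δ₀ := lt_min (by norm_num) (by positivity)
  refine ⟨δ₀, hδ₀0, fun δ hδ hδδ => ?_⟩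
  -- continuity of g
  have hvec : Continuous fun p : ℝ × ℝ => (![p.1, p.2] : Fin 2 → ℝ) := by
    refine continuous_pi fun i => ?_
    fin_cases i
    · exact continuous_fst
    · exact continuous_snd
  have hgc : Continuous fun p : ℝ × ℝ => g p.1 p.2 := by
    have hfe : (fun p : ℝ × ℝ => g p.1 p.2)
        = fun p : ℝ × ℝ => 8 * p.1 ^ 2 + α / 24 * p.2 ^ 4
            + MvPolynomial.eval ![p.1, p.2] R := funext fun p => hg p.1 p.2
    rw [hfe]
    exact ((continuous_const.mul (continuous_fst.pow 2)).add
      (continuous_const.mul (continuous_snd.pow 4))).add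
      ((MvPolynomial.continuous_eval R).comp hvec)
  -- key remainder bound on the box
  have hRK : ∀ u v : ℝ, |u| ≤ δ → |v| ≤ δ →
      |MvPolynomial.eval ![u, v] R| ≤ ε * (u ^ 2 + v ^ 4) := by
    intro u v hu hv
    have hud : |u| ≤ δ₀ := hu.trans hδδ
    have hvd : |v| ≤ δ₀ := hv.trans hδδ
    have hδ₀1 : δ₀ ≤ 1/2 := min_le_left _ _
    have hδ₀2 : δ₀ ≤ (ε/(C+1))^4/2 := min_le_right _ _
    have hu2 : u ^ 2 ≤ δ₀ ^ 2 := by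
      rw [← sq_abs]; exact pow_le_pow_left₀ (abs_nonneg u) hud 2
    have habs4 : |v| ^ 4 = v ^ 4 := by
      rw [pow_abs, abs_of_nonneg (by positivity : (0:ℝ) ≤ v ^ 4)]
    have hv4 : v ^ 4 ≤ δ₀ ^ 4 := by
      rw [← habs4]; exact pow_le_pow_left₀ (abs_nonneg v) hvd 4
    set s : ℝ := u ^ 2 + v ^ 4 with hsd
    have hs0 : (0:ℝ) ≤ s := by positivity
    have hs2 : s ≤ 2 * δ₀ := by
      have h1 : δ₀ ^ 2 ≤ δ₀ := by nlinarith
      have h2 : δ₀ ^ 4 ≤ δ₀ := by nlinarith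
      linarith
    have hs1 : s ≤ 1 := by linarith
    have hsE : s ≤ (ε/(C+1))^4 := by linarith
    have h14 : s ^ ((1:ℝ)/4) ≤ ε/(C+1) := by
      calc s ^ ((1:ℝ)/4) ≤ ((ε/(C+1))^4) ^ ((1:ℝ)/4) :=
            Real.rpow_le_rpow hs0 hsE (by norm_num)
        _ = ε/(C+1) := by
            rw [← Real.rpow_natCast (ε/(C+1)) 4, ← Real.rpow_mul (by positivity)]
            norm_num
    calc |MvPolynomial.eval ![u, v] R| ≤ C * s ^ ((5:ℝ)/4) := hC u v hs1
      _ = C * (s ^ ((1:ℝ)/4) * s) := by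
          rw [show ((5:ℝ)/4) = (1:ℝ)/4 + 1 by norm_num,
            Real.rpow_add' hs0 (by norm_num), Real.rpow_one]
      _ ≤ C * ((ε/(C+1)) * s) := by
          refine mul_le_mul_of_nonneg_left ?_ hC0
          exact mul_le_mul_of_nonneg_right h14 hs0
      _ ≤ (C+1) * ((ε/(C+1)) * s) := by
          refine mul_le_mul_of_nonneg_right (by linarith) ?_
          positivity
      _ = ε * s := by field_simp
  -- domination
  have hbd : ∀ t : ℝ, 0 < t → ∀ p : ℝ × ℝ,
      ‖lamF g δ t p‖ ≤ Real.exp (-4 * p.1^2) * Real.exp (-(α/48) * p.2^4) := by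
    intro t ht p
    obtain ⟨x, y⟩ := p
    have hc1 : (0:ℝ) < t ^ ((1:ℝ)/2) := Real.rpow_pos_of_pos ht _
    have hc2 : (0:ℝ) < t ^ ((1:ℝ)/4) := Real.rpow_pos_of_pos ht _
    set c1 := t ^ ((1:ℝ)/2) with hc1d
    set c2 := t ^ ((1:ℝ)/4) with hc2d
    by_cases hp : (x, y) ∈ (Ioc (-(δ / c1)) (δ / c1) ×ˢ Ioc (-(δ / c2)) (δ / c2))
    · rw [lamF, indicator_of_mem hp]
      rw [Real.norm_eq_abs, Real.abs_exp, ← Real.exp_add, Real.exp_le_exp]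
      obtain ⟨hpx, hpy⟩ := hp
      have hx : |x| ≤ δ / c1 := abs_le.mpr ⟨hpx.1.le, hpx.2⟩
      have hy : |y| ≤ δ / c2 := abs_le.mpr ⟨hpy.1.le, hpy.2⟩
      have hu : |c1 * x| ≤ δ := by
        rw [abs_mul, abs_of_pos hc1]
        calc c1 * |x| ≤ c1 * (δ / c1) := mul_le_mul_of_nonneg_left hx hc1.le
          _ = δ := mul_div_cancel₀ _ (ne_of_gt hc1)
      have hv : |c2 * y| ≤ δ := by
        rw [abs_mul, abs_of_pos hc2]
        calc c2 * |y| ≤ c2 * (δ / c2) := mul_le_mul_of_nonneg_left hy hc2.le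
          _ = δ := mul_div_cancel₀ _ (ne_of_gt hc2)
      have hRb := hRK _ _ hu hv
      have hu2 : (c1 * x) ^ 2 = t * x ^ 2 := by rw [mul_pow, hc1d, lam_c_sq t ht]
      have hv4 : (c2 * y) ^ 4 = t * y ^ 4 := by rw [mul_pow, hc2d, lam_c_four t ht]
      show -g (c1 * x) (c2 * y) / t ≤ -4 * x ^ 2 + -(α/48) * y ^ 4
      rw [hg, hu2, hv4, ← neg_div, div_le_iff₀ ht]
      have hR1 : -(ε * (t * x ^ 2 + t * y ^ 4))
          ≤ MvPolynomial.eval ![c1 * x, c2 * y] R := by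
        rw [hu2, hv4] at hRb
        linarith [neg_abs_le (MvPolynomial.eval ![c1 * x, c2 * y] R), hRb]
      have k1 : 0 ≤ (4 - ε) * (t * x ^ 2) :=
        mul_nonneg (by linarith) (by positivity)
      have k2 : 0 ≤ (α/48 - ε) * (t * y ^ 4) :=
        mul_nonneg (by linarith) (by positivity)
      nlinarith [k1, k2, hR1]
    · rw [lamF, indicator_of_notMem hp, norm_zero]
      positivity
  -- measurability
  have hmeasF : ∀ t : ℝ, AEStronglyMeasurable (lamF g δ t) volume := by
    intro t
    refine AEStronglyMeasurable.indicator ?_ (measurableSet_Ioc.prod measurableSet_Ioc)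
    have h2 : Continuous fun p : ℝ × ℝ => (t ^ ((1:ℝ)/2) * p.1, t ^ ((1:ℝ)/4) * p.2) :=
      (continuous_const.mul continuous_fst).prodMk (continuous_const.mul continuous_snd)
    have hcomp : Continuous fun p : ℝ × ℝ =>
        g (t ^ ((1:ℝ)/2) * p.1) (t ^ ((1:ℝ)/4) * p.2) := hgc.comp h2
    exact (Real.continuous_exp.comp ((hcomp.neg).div_const t)).aestronglyMeasurable
  -- integrable dominating function
  have hG : Integrable (fun p : ℝ × ℝ =>
      Real.exp (-4 * p.1^2) * Real.exp (-(α/48) * p.2^4)) volume := by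
    rw [MeasureTheory.Measure.volume_eq_prod]
    exact Integrable.mul_prod (integrable_exp_neg_mul_sq (by norm_num))
      (lam_int_quartic _ (by positivity))
  have hFint : ∀ t : ℝ, 0 < t → Integrable (lamF g δ t) volume := fun t ht =>
    Integrable.mono hG (hmeasF t) (ae_of_all _ fun p => by
      rw [Real.norm_eq_abs (Real.exp _ * Real.exp _),
        abs_of_pos (by positivity : (0:ℝ) < Real.exp _ * Real.exp _)]
      exact hbd t ht p)
  -- pointwise convergence
  have hlim : ∀ p : ℝ × ℝ, Tendsto (fun t => lamF g δ t p) (nhdsWithin 0 (Set.Ioi 0))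
      (nhds (Real.exp (-8 * p.1 ^ 2) * Real.exp (-(α/24) * p.2 ^ 4))) := by
    intro p
    obtain ⟨x, y⟩ := p
    set K : ℝ := x ^ 2 + y ^ 4 with hK
    have hK0 : 0 ≤ K := by positivity
    have ev_pos : ∀ᶠ t : ℝ in nhdsWithin 0 (Set.Ioi 0), 0 < t :=
      eventually_mem_nhdsWithin
    have ev_x : ∀ᶠ t : ℝ in nhdsWithin 0 (Set.Ioi 0), t ^ ((1:ℝ)/2) < δ / (|x| + 1) :=
      (lam_rpow_tendsto _ (by norm_num)).eventually_lt_const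
        (by positivity : (0:ℝ) < δ / (|x| + 1))
    have ev_y : ∀ᶠ t : ℝ in nhdsWithin 0 (Set.Ioi 0), t ^ ((1:ℝ)/4) < δ / (|y| + 1) :=
      (lam_rpow_tendsto _ (by norm_num)).eventually_lt_const
        (by positivity : (0:ℝ) < δ / (|y| + 1))
    have ev_K : ∀ᶠ t : ℝ in nhdsWithin 0 (Set.Ioi 0), t * K ≤ 1 := by
      have hid : Tendsto (fun t : ℝ => t) (nhdsWithin 0 (Set.Ioi 0)) (nhds 0) :=
        tendsto_id.mono_left nhdsWithin_le_nhds
      have hmul : Tendsto (fun t : ℝ => t * K) (nhdsWithin 0 (Set.Ioi 0)) (nhds 0) := by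
        simpa using hid.mul_const K
      exact hmul.eventually_le_const (by norm_num : (0:ℝ) < 1)
    have hr : Tendsto (fun t : ℝ => MvPolynomial.eval
        ![t ^ ((1:ℝ)/2) * x, t ^ ((1:ℝ)/4) * y] R / t) (nhdsWithin 0 (Set.Ioi 0)) (nhds 0) := by
      apply squeeze_zero_norm' (a := fun t : ℝ => C * K ^ ((5:ℝ)/4) * t ^ ((1:ℝ)/4))
      · filter_upwards [ev_pos, ev_K] with t ht htK
        have hu2 : (t ^ ((1:ℝ)/2) * x) ^ 2 = t * x ^ 2 := by rw [mul_pow, lam_c_sq t ht]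
        have hv4 : (t ^ ((1:ℝ)/4) * y) ^ 4 = t * y ^ 4 := by rw [mul_pow, lam_c_four t ht]
        have hsum : (t ^ ((1:ℝ)/2) * x) ^ 2 + (t ^ ((1:ℝ)/4) * y) ^ 4 = t * K := by
          rw [hu2, hv4, hK]; ring
        have hb := hC (t ^ ((1:ℝ)/2) * x) (t ^ ((1:ℝ)/4) * y) (by rw [hsum]; exact htK)
        rw [hsum] at hb
        rw [Real.norm_eq_abs, abs_div, abs_of_pos ht, div_le_iff₀ ht]
        calc |MvPolynomial.eval ![t ^ ((1:ℝ)/2) * x, t ^ ((1:ℝ)/4) * y] R|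
            ≤ C * (t * K) ^ ((5:ℝ)/4) := hb
          _ = C * K ^ ((5:ℝ)/4) * t ^ ((1:ℝ)/4) * t := by
              rw [Real.mul_rpow ht.le hK0,
                show ((5:ℝ)/4) = (1:ℝ)/4 + 1 by norm_num, Real.rpow_add ht,
                Real.rpow_one]
              ring
      · have := (lam_rpow_tendsto ((1:ℝ)/4) (by norm_num)).const_mul (C * K ^ ((5:ℝ)/4))
        simpa using this
    have ev_eq : (fun t => lamF g δ t (x, y)) =ᶠ[nhdsWithin 0 (Set.Ioi 0)]
        fun t => Real.exp (-(8 * x ^ 2 + α / 24 * y ^ 4 +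
          MvPolynomial.eval ![t ^ ((1:ℝ)/2) * x, t ^ ((1:ℝ)/4) * y] R / t)) := by
      filter_upwards [ev_pos, ev_x, ev_y] with t ht htx hty
      have hc1 : (0:ℝ) < t ^ ((1:ℝ)/2) := Real.rpow_pos_of_pos ht _
      have hc2 : (0:ℝ) < t ^ ((1:ℝ)/4) := Real.rpow_pos_of_pos ht _
      have hx : |x| < δ / t ^ ((1:ℝ)/2) := by
        rw [lt_div_iff₀ hc1]
        rw [lt_div_iff₀ (by positivity : (0:ℝ) < |x| + 1)] at htx
        nlinarith [abs_nonneg x, hc1]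
      have hy : |y| < δ / t ^ ((1:ℝ)/4) := by
        rw [lt_div_iff₀ hc2]
        rw [lt_div_iff₀ (by positivity : (0:ℝ) < |y| + 1)] at hty
        nlinarith [abs_nonneg y, hc2]
      have hmem : (x, y) ∈ (Ioc (-(δ / t ^ ((1:ℝ)/2))) (δ / t ^ ((1:ℝ)/2)) ×ˢ
          Ioc (-(δ / t ^ ((1:ℝ)/4))) (δ / t ^ ((1:ℝ)/4))) := by
        constructor
        · exact ⟨neg_lt_of_abs_lt hx, (le_abs_self x).trans hx.le⟩
        · exact ⟨neg_lt_of_abs_lt hy, (le_abs_self y).trans hy.le⟩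
      rw [lamF, indicator_of_mem hmem]
      congr 1
      rw [hg, mul_pow, lam_c_sq t ht, mul_pow, lam_c_four t ht]
      field_simp
    rw [← Real.exp_add]
    refine Tendsto.congr' ev_eq.symm ?_
    have h1 : Tendsto (fun t : ℝ => -(8 * x ^ 2 + α / 24 * y ^ 4 +
        MvPolynomial.eval ![t ^ ((1:ℝ)/2) * x, t ^ ((1:ℝ)/4) * y] R / t))
        (nhdsWithin 0 (Set.Ioi 0)) (nhds (-(8 * x ^ 2 + α / 24 * y ^ 4 + 0))) :=
      (tendsto_const_nhds.add hr).neg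
    have h2 := (Real.continuous_exp.tendsto _).comp h1
    simp only [add_zero] at h2
    convert h2 using 2 <;> first | rfl | ring
  -- dominated convergence
  have hDCT : Tendsto (fun t : ℝ => ∫ p : ℝ × ℝ, lamF g δ t p) (nhdsWithin 0 (Set.Ioi 0))
      (nhds (∫ p : ℝ × ℝ, Real.exp (-8 * p.1 ^ 2) * Real.exp (-(α/24) * p.2 ^ 4))) := by
    refine tendsto_integral_filter_of_dominated_convergence
      (fun p : ℝ × ℝ => Real.exp (-4 * p.1^2) * Real.exp (-(α/48) * p.2^4))
      (Eventually.of_forall hmeasF) ?_ hG (ae_of_all _ hlim)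
    filter_upwards [eventually_mem_nhdsWithin] with t ht
    exact ae_of_all _ (hbd t ht)
  -- value of the limit integral
  have hval : (∫ p : ℝ × ℝ, Real.exp (-8 * p.1 ^ 2) * Real.exp (-(α/24) * p.2 ^ 4))
      = Real.Gamma (1 / 2) * Real.Gamma (1 / 4) *
        (8 : ℝ) ^ (-(1 / 2 : ℝ)) * (α / 24) ^ (-(1 / 4 : ℝ)) / 2 := by
    calc (∫ p : ℝ × ℝ, Real.exp (-8 * p.1 ^ 2) * Real.exp (-(α/24) * p.2 ^ 4))
        = (∫ x : ℝ, Real.exp (-8 * x ^ 2)) * ∫ y : ℝ, Real.exp (-(α/24) * y ^ 4) := by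
          rw [MeasureTheory.Measure.volume_eq_prod]
          exact integral_prod_mul (μ := volume) (ν := volume)
            (fun x : ℝ => Real.exp (-8 * x ^ 2)) (fun y : ℝ => Real.exp (-(α/24) * y ^ 4))
      _ = Real.Gamma (1 / 2) * Real.Gamma (1 / 4) *
          (8 : ℝ) ^ (-(1 / 2 : ℝ)) * (α / 24) ^ (-(1 / 4 : ℝ)) / 2 := by
          rw [lam_int_gauss_val, lam_int_quartic_val _ (by positivity : (0:ℝ) < α/24)]
          ring
  rw [← hval]
  -- equality of the two expressions for t > 0
  refine Tendsto.congr' ?_ hDCT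
  filter_upwards [eventually_mem_nhdsWithin] with t (ht : 0 < t)
  symm
  have hFint' := hFint t ht
  have hc1 : (0:ℝ) < t ^ ((1:ℝ)/2) := Real.rpow_pos_of_pos ht _
  have hc2 : (0:ℝ) < t ^ ((1:ℝ)/4) := Real.rpow_pos_of_pos ht _
  set c1 := t ^ ((1:ℝ)/2) with hc1d
  set c2 := t ^ ((1:ℝ)/4) with hc2d
  set A := δ / c1 with hA
  set B := δ / c2 with hB
  have hA0 : 0 < A := div_pos hδ hc1
  have hB0 : 0 < B := div_pos hδ hc2
  have inner : ∀ u : ℝ, (∫ v in (-δ)..δ, Real.exp (-g u v / t))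
      = c2 * ∫ y in (-B)..B, Real.exp (-g u (c2 * y) / t) := by
    intro u
    have h := intervalIntegral.smul_integral_comp_mul_left
      (a := -B) (b := B) (fun v => Real.exp (-g u v / t)) c2
    rw [mul_neg, mul_div_cancel₀ _ (ne_of_gt hc2)] at h
    rw [← h, smul_eq_mul]
  have outer : (∫ u in (-δ)..δ, ∫ y in (-B)..B, Real.exp (-g u (c2 * y) / t))
      = c1 * ∫ x in (-A)..A, ∫ y in (-B)..B, Real.exp (-g (c1 * x) (c2 * y) / t) := by
    have h := intervalIntegral.smul_integral_comp_mul_left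
      (a := -A) (b := A) (fun u => ∫ y in (-B)..B, Real.exp (-g u (c2 * y) / t)) c1
    rw [mul_neg, mul_div_cancel₀ _ (ne_of_gt hc1)] at h
    rw [← h, smul_eq_mul]
  have hI : (∫ x in (-A)..A, ∫ y in (-B)..B, Real.exp (-g (c1 * x) (c2 * y) / t))
      = ∫ p : ℝ × ℝ, lamF g δ t p := by
    have hmeasS : MeasurableSet (Ioc (-A) A ×ˢ Ioc (-B) B) :=
      measurableSet_Ioc.prod measurableSet_Ioc
    have hFeq : lamF g δ t = (Ioc (-A) A ×ˢ Ioc (-B) B).indicator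
        (fun p : ℝ × ℝ => Real.exp (-g (c1 * p.1) (c2 * p.2) / t)) := rfl
    rw [hFeq] at hFint'
    have hIOn : IntegrableOn (fun p : ℝ × ℝ => Real.exp (-g (c1 * p.1) (c2 * p.2) / t))
        (Ioc (-A) A ×ˢ Ioc (-B) B) volume := (integrable_indicator_iff hmeasS).mp hFint'
    have hIOn' : IntegrableOn (fun p : ℝ × ℝ => Real.exp (-g (c1 * p.1) (c2 * p.2) / t))
        (Ioc (-A) A ×ˢ Ioc (-B) B) (volume.prod volume) := by
      rwa [← MeasureTheory.Measure.volume_eq_prod]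
    calc (∫ x in (-A)..A, ∫ y in (-B)..B, Real.exp (-g (c1 * x) (c2 * y) / t))
        = ∫ x in Ioc (-A) A, ∫ y in Ioc (-B) B, Real.exp (-g (c1 * x) (c2 * y) / t) := by
          rw [intervalIntegral.integral_of_le (by linarith : -A ≤ A)]
          refine setIntegral_congr_fun measurableSet_Ioc fun x _ => ?_
          rw [intervalIntegral.integral_of_le (by linarith : -B ≤ B)]
      _ = ∫ z in Ioc (-A) A ×ˢ Ioc (-B) B,
            Real.exp (-g (c1 * z.1) (c2 * z.2) / t) ∂(volume.prod volume) :=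
          (setIntegral_prod _ hIOn').symm
      _ = ∫ z in Ioc (-A) A ×ˢ Ioc (-B) B, Real.exp (-g (c1 * z.1) (c2 * z.2) / t) := by
          rw [← MeasureTheory.Measure.volume_eq_prod]
      _ = ∫ p : ℝ × ℝ, lamF g δ t p := by
          rw [hFeq, integral_indicator hmeasS]
  have hpow : t ^ (-(3 / 4 : ℝ)) * (c2 * (c1 * 1)) = 1 := by
    rw [mul_one, hc1d, hc2d, ← Real.rpow_add ht, ← Real.rpow_add ht]
    norm_num
  simp_rw [inner]
  rw [intervalIntegral.integral_const_mul, outer, hI]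
  calc t ^ (-(3 / 4 : ℝ)) * (c2 * (c1 * ∫ p : ℝ × ℝ, lamF g δ t p))
      = (t ^ (-(3 / 4 : ℝ)) * (c2 * (c1 * 1))) * ∫ p : ℝ × ℝ, lamF g δ t p := by ring
    _ = ∫ p : ℝ × ℝ, lamF g δ t p := by rw [hpow, one_mul]
end
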